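/- Let A_j (1 ≤ j ≤ n) be d×d positive definite complex matrices and let s, t satisfy either 1 ≥ t ≥ s > 1/2 or 0 ≤ t ≤ s < 1/2. Then (Σ_{j=1}^n A_j^s) ∘ (Σ_{j=1}^n A_j^{1−s}) + ((t − s)/(s − 1/2)) · ((Σ_{j=1}^n A_j^s) ∘ (Σ_{j=1}^n A_j^{1−s}) − (Σ_{j=1}^n A_j^{1/2}) ∘ (Σ_{j=1}^n A_j^{1/2})) ≤ (Σ_{j=1}^n A_j^t) ∘ (Σ_{j=1}^n A_j^{1−t}), where ∘ is the Hadamard (entrywise) product and ≤ is the Loewner order. -/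

import Mathlib

open Matrix Kronecker
open scoped ComplexOrder

/-- Real power `A^r` of a positive definite matrix, via the (continuous)
functional calculus on selfadjoint matrices. -/
noncomputable def mpow {d : ℕ} (A : Matrix (Fin d) (Fin d) ℂ) (r : ℝ) :
    Matrix (Fin d) (Fin d) ℂ :=
  cfc (fun x : ℝ => x ^ r) A

section Scalar

lemma convexOn_cosh' : ConvexOn ℝ Set.univ Real.cosh := by
  have h1 : ConvexOn ℝ Set.univ (fun x : ℝ => Real.exp (-x)) := by
    simpa [Function.comp_def] using convexOn_exp.comp_affineMap (-AffineMap.id ℝ ℝ)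
  have h2 := (convexOn_exp.add h1).smul (by norm_num : (0:ℝ) ≤ (1/2))
  convert h2 using 2 with x
  · rfl
  · rfl
  rw [Real.cosh_eq]; simp; ring

lemma cosh_key (r u : ℝ) (hr : 0 ≤ r) :
    (1 + r) * Real.cosh u ≤ Real.cosh ((1 + r) * u) + r := by
  have hpos : (0:ℝ) < 1 + r := by linarith
  have h := convexOn_cosh'.2 (Set.mem_univ ((1+r)*u)) (Set.mem_univ 0)
    (by positivity : (0:ℝ) ≤ (1+r)⁻¹) (by positivity : (0:ℝ) ≤ r/(1+r))
    (by field_simp)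
  simp only [smul_eq_mul, mul_zero, add_zero, Real.cosh_zero, mul_one] at h
  rw [show (1+r)⁻¹ * ((1+r)*u) = u by field_simp] at h
  have h2 := mul_le_mul_of_nonneg_left h hpos.le
  calc (1+r) * Real.cosh u ≤ (1+r) * ((1+r)⁻¹ * Real.cosh ((1+r)*u) + r/(1+r)) := h2
    _ = Real.cosh ((1+r)*u) + r := by field_simp

lemma rpow_mix (a b : ℝ) (ha : 0 < a) (hb : 0 < b) (α : ℝ) :
    a ^ α * b ^ (1 - α) =
      Real.exp ((Real.log a + Real.log b)/2 + (α - 1/2) * (Real.log a - Real.log b)) := by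
  rw [Real.rpow_def_of_pos ha, Real.rpow_def_of_pos hb, ← Real.exp_add]
  ring_nf

/-- The key scalar inequality. -/
lemma scalar_key (a b s t : ℝ) (ha : 0 < a) (hb : 0 < b)
    (hst : (1 ≥ t ∧ t ≥ s ∧ s > 1/2) ∨ (0 ≤ t ∧ t ≤ s ∧ s < 1/2)) :
    (1 + (t - s)/(s - 1/2)) * (a ^ s * b ^ (1 - s) + a ^ (1 - s) * b ^ s) ≤
      (a ^ t * b ^ (1 - t) + a ^ (1 - t) * b ^ t) +
        (t - s)/(s - 1/2) * (2 * (a ^ (1/2:ℝ) * b ^ (1/2:ℝ))) := by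
  set r := (t - s)/(s - 1/2) with hrdef
  have hx : s - 1/2 ≠ 0 := by
    rcases hst with ⟨_,_,h⟩|⟨_,_,h⟩ <;> intro h0 <;> rw [sub_eq_zero] at h0 <;> simp [h0] at h
  have hr : 0 ≤ r := by
    rcases hst with ⟨h1,h2,h3⟩|⟨h1,h2,h3⟩
    · apply div_nonneg <;> linarith
    · apply div_nonneg_of_nonpos <;> linarith
  have hrx : r * (s - 1/2) = t - s := div_mul_cancel₀ _ hx
  have hy : t - 1/2 = (1 + r) * (s - 1/2) := by nlinarith [hrx]
  set m := (Real.log a + Real.log b)/2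
  set L := Real.log a - Real.log b
  have e1 : ∀ α : ℝ, a ^ α * b ^ (1-α) + a ^ (1-α) * b ^ α =
      2 * Real.exp m * Real.cosh ((α - 1/2) * L) := by
    intro α
    have h2 := rpow_mix a b ha hb (1-α)
    rw [show (1:ℝ)-(1-α) = α by ring] at h2
    rw [rpow_mix a b ha hb α, h2, Real.cosh_eq, Real.exp_add, Real.exp_add]
    rw [show ((1:ℝ)-α) - 1/2 = -(α - 1/2) by ring, neg_mul, Real.exp_neg]
    ring
  have e2 : a ^ (1/2:ℝ) * b ^ (1/2:ℝ) = Real.exp m := by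
    have h3 := rpow_mix a b ha hb (1/2)
    norm_num at h3
    exact h3
  rw [e1 s, e1 t, e2]
  have : (t - 1/2) * L = (1 + r) * ((s - 1/2) * L) := by rw [hy]; ring
  rw [this]
  nlinarith [Real.exp_pos m, cosh_key r ((s-1/2)*L) hr]

end Scalar

section MatrixPart

variable {d : ℕ} {ι : Type*} [Fintype ι]

lemma sum_swap4 {M A B C D : Type*} [AddCommMonoid M] [Fintype A] [Fintype B] [Fintype C]
    [Fintype D] (f : A → B → C → D → M) :
    ∑ a, ∑ b, ∑ i, ∑ m, f a b i m = ∑ i, ∑ m, ∑ a, ∑ b, f a b i m :=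
  calc ∑ a, ∑ b, ∑ i, ∑ m, f a b i m
      = ∑ a, ∑ i, ∑ b, ∑ m, f a b i m :=
        Finset.sum_congr rfl fun a _ => Finset.sum_comm
    _ = ∑ i, ∑ a, ∑ b, ∑ m, f a b i m := Finset.sum_comm
    _ = ∑ i, ∑ a, ∑ m, ∑ b, f a b i m :=
        Finset.sum_congr rfl fun i _ => Finset.sum_congr rfl fun a _ => Finset.sum_comm
    _ = ∑ i, ∑ m, ∑ a, ∑ b, f a b i m :=
        Finset.sum_congr rfl fun i _ => Finset.sum_comm

/-- The sum-of-rank-one-outer-products matrix with weights `(ev i)^α`. -/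
noncomputable def XM (ev : ι → ℝ) (U : ι → Fin d → ℂ) (α : ℝ) :
    Matrix (Fin d) (Fin d) ℂ :=
  Matrix.of fun a b => ∑ i, ((ev i ^ α : ℝ) : ℂ) * (U i a * (starRingEnd ℂ) (U i b))

lemma XM_isHermitian (ev : ι → ℝ) (U : ι → Fin d → ℂ) (α : ℝ) :
    (XM ev U α).IsHermitian := by
  unfold Matrix.IsHermitian
  ext a b
  simp only [XM, conjTranspose_apply, of_apply, star_sum, star_mul', RCLike.star_def,
    _root_.map_mul, Complex.conj_conj, Complex.conj_ofReal]
  exact Finset.sum_congr rfl fun i _ => by ring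

lemma hadamard_isHermitian {X Y : Matrix (Fin d) (Fin d) ℂ}
    (hX : X.IsHermitian) (hY : Y.IsHermitian) : (X.hadamard Y).IsHermitian := by
  unfold Matrix.IsHermitian at *
  ext a b
  have hX' : (starRingEnd ℂ) (X b a) = X a b := by
    conv_rhs => rw [← hX]
    simp [conjTranspose_apply]
  have hY' : (starRingEnd ℂ) (Y b a) = Y a b := by
    conv_rhs => rw [← hY]
    simp [conjTranspose_apply]
  simp only [conjTranspose_apply, hadamard_apply, star_mul', RCLike.star_def]
  rw [mul_comm, hX', hY']
  try ring

/-- Quadratic form of the Hadamard product of two `XM` matrices. -/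
lemma quad_form (ev : ι → ℝ) (U : ι → Fin d → ℂ) (α β : ℝ) (v : Fin d → ℂ) :
    star v ⬝ᵥ ((XM ev U α).hadamard (XM ev U β)) *ᵥ v
    = ∑ i, ∑ m, ((ev i ^ α * ev m ^ β *
        Complex.normSq (∑ a, (starRingEnd ℂ) (v a) * (U i a * U m a)) : ℝ) : ℂ) := by
  have key : ∀ i m : ι,
      ((Complex.normSq (∑ a, (starRingEnd ℂ) (v a) * (U i a * U m a)) : ℝ) : ℂ)
        = ∑ a, ∑ b, ((starRingEnd ℂ) (v a) * (U i a * U m a)) *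
            (v b * ((starRingEnd ℂ) (U i b) * (starRingEnd ℂ) (U m b))) := by
    intro i m
    rw [← Complex.mul_conj, map_sum, Finset.sum_mul_sum]
    refine Finset.sum_congr rfl fun a _ => Finset.sum_congr rfl fun b _ => ?_
    simp only [_root_.map_mul, Complex.conj_conj]
    all_goals ring
  have lhs_eq : star v ⬝ᵥ ((XM ev U α).hadamard (XM ev U β)) *ᵥ v
      = ∑ a, ∑ b, ∑ i, ∑ m, ((ev i ^ α : ℝ) : ℂ) * ((ev m ^ β : ℝ) : ℂ) *
          (((starRingEnd ℂ) (v a) * (U i a * U m a)) *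
            (v b * ((starRingEnd ℂ) (U i b) * (starRingEnd ℂ) (U m b)))) := by
    simp only [dotProduct, mulVec, Pi.star_apply, RCLike.star_def]
    refine Finset.sum_congr rfl fun a _ => ?_
    rw [Finset.mul_sum]
    refine Finset.sum_congr rfl fun b _ => ?_
    simp only [hadamard_apply, XM, of_apply]
    rw [Finset.sum_mul_sum]
    simp only [Finset.sum_mul, Finset.mul_sum]
    exact Finset.sum_congr rfl fun i _ => Finset.sum_congr rfl fun m _ => by ring
  rw [lhs_eq, sum_swap4]
  refine Finset.sum_congr rfl fun i _ => Finset.sum_congr rfl fun m _ => ?_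
  rw [Complex.ofReal_mul, Complex.ofReal_mul, key i m]
  all_goals simp only [Finset.mul_sum]
  all_goals exact Finset.sum_congr rfl fun a _ => Finset.sum_congr rfl fun b _ => by ring

lemma real_combo {ι : Type*} [Fintype ι] (ev : ι → ℝ) (hev : ∀ i, 0 < ev i) (s t r : ℝ)
    (hrdef : r = (t - s)/(s - 1/2))
    (hst : (1 ≥ t ∧ t ≥ s ∧ s > 1/2) ∨ (0 ≤ t ∧ t ≤ s ∧ s < 1/2))
    (g : ι → ι → ℝ) (hsym : ∀ i m, g i m = g m i) (hnn : ∀ i m, 0 ≤ g i m) :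
    0 ≤ (∑ i, ∑ m, ev i ^ t * ev m ^ (1-t) * g i m) -
      ((∑ i, ∑ m, ev i ^ s * ev m ^ (1-s) * g i m) +
        r * ((∑ i, ∑ m, ev i ^ s * ev m ^ (1-s) * g i m) -
          ∑ i, ∑ m, ev i ^ (1/2:ℝ) * ev m ^ (1/2:ℝ) * g i m)) := by
  have hr : 0 ≤ r := by
    rw [hrdef]
    rcases hst with ⟨h1,h2,h3⟩|⟨h1,h2,h3⟩
    · apply div_nonneg <;> linarith
    · apply div_nonneg_of_nonpos <;> linarith
  have key2 : ∀ i m : ι, 0 ≤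
      (ev i ^ t * ev m ^ (1-t) * g i m - (ev i ^ s * ev m ^ (1-s) * g i m +
        r * (ev i ^ s * ev m ^ (1-s) * g i m - ev i ^ (1/2:ℝ) * ev m ^ (1/2:ℝ) * g i m)))
      + (ev m ^ t * ev i ^ (1-t) * g m i - (ev m ^ s * ev i ^ (1-s) * g m i +
        r * (ev m ^ s * ev i ^ (1-s) * g m i - ev m ^ (1/2:ℝ) * ev i ^ (1/2:ℝ) * g m i))) := by
    intro i m
    have hk := scalar_key (ev i) (ev m) s t (hev i) (hev m) hst
    rw [← hrdef] at hk
    have h3 : 0 ≤ ((ev i ^ t * ev m ^ (1-t) + ev i ^ (1-t) * ev m ^ t) +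
        r * (2 * (ev i ^ (1/2:ℝ) * ev m ^ (1/2:ℝ))) -
        (1 + r) * (ev i ^ s * ev m ^ (1-s) + ev i ^ (1-s) * ev m ^ s)) * g i m :=
      mul_nonneg (by linarith [hk]) (hnn i m)
    rw [← hsym i m]
    nlinarith [h3]
  have hsum : 0 ≤ ∑ i : ι, ∑ m : ι,
      ((ev i ^ t * ev m ^ (1-t) * g i m - (ev i ^ s * ev m ^ (1-s) * g i m +
        r * (ev i ^ s * ev m ^ (1-s) * g i m - ev i ^ (1/2:ℝ) * ev m ^ (1/2:ℝ) * g i m)))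
      + (ev m ^ t * ev i ^ (1-t) * g m i - (ev m ^ s * ev i ^ (1-s) * g m i +
        r * (ev m ^ s * ev i ^ (1-s) * g m i - ev m ^ (1/2:ℝ) * ev i ^ (1/2:ℝ) * g m i)))) :=
    Finset.sum_nonneg fun i _ => Finset.sum_nonneg fun m _ => key2 i m
  have hsw : (∑ i : ι, ∑ m : ι,
      (ev m ^ t * ev i ^ (1-t) * g m i - (ev m ^ s * ev i ^ (1-s) * g m i +
        r * (ev m ^ s * ev i ^ (1-s) * g m i - ev m ^ (1/2:ℝ) * ev i ^ (1/2:ℝ) * g m i))))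
      = ∑ i : ι, ∑ m : ι,
      (ev i ^ t * ev m ^ (1-t) * g i m - (ev i ^ s * ev m ^ (1-s) * g i m +
        r * (ev i ^ s * ev m ^ (1-s) * g i m - ev i ^ (1/2:ℝ) * ev m ^ (1/2:ℝ) * g i m))) :=
    Finset.sum_comm
  rw [Finset.sum_congr rfl (fun i (_ : i ∈ Finset.univ) => Finset.sum_add_distrib),
    Finset.sum_add_distrib, hsw] at hsum
  have hdist : (∑ i : ι, ∑ m : ι,
      (ev i ^ t * ev m ^ (1-t) * g i m - (ev i ^ s * ev m ^ (1-s) * g i m +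
        r * (ev i ^ s * ev m ^ (1-s) * g i m - ev i ^ (1/2:ℝ) * ev m ^ (1/2:ℝ) * g i m))))
      = (∑ i, ∑ m, ev i ^ t * ev m ^ (1-t) * g i m) -
      ((∑ i, ∑ m, ev i ^ s * ev m ^ (1-s) * g i m) +
        r * ((∑ i, ∑ m, ev i ^ s * ev m ^ (1-s) * g i m) -
          ∑ i, ∑ m, ev i ^ (1/2:ℝ) * ev m ^ (1/2:ℝ) * g i m)) := by
    simp only [Finset.sum_sub_distrib, Finset.sum_add_distrib, ← Finset.mul_sum]
  rw [hdist] at hsum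
  linarith

/-- The main matrix inequality, for sums of rank-one outer products. -/
lemma XM_combo_posSemidef (ev : ι → ℝ) (hev : ∀ i, 0 < ev i) (U : ι → Fin d → ℂ)
    (s t : ℝ)
    (hst : (1 ≥ t ∧ t ≥ s ∧ s > 1/2) ∨ (0 ≤ t ∧ t ≤ s ∧ s < 1/2)) :
    ((XM ev U t).hadamard (XM ev U (1 - t)) -
      ((XM ev U s).hadamard (XM ev U (1 - s)) +
        ((t - s) / (s - 1/2)) •
          ((XM ev U s).hadamard (XM ev U (1 - s)) -
            (XM ev U (1/2)).hadamard (XM ev U (1/2))))).PosSemidef := by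
  set r := (t - s)/(s - 1/2) with hrdef
  have hr : 0 ≤ r := by
    rcases hst with ⟨h1,h2,h3⟩|⟨h1,h2,h3⟩
    · apply div_nonneg <;> linarith
    · apply div_nonneg_of_nonpos <;> linarith
  rw [posSemidef_iff_dotProduct_mulVec]
  constructor
  · have H1 := hadamard_isHermitian (XM_isHermitian ev U t) (XM_isHermitian ev U (1-t))
    have H2 := hadamard_isHermitian (XM_isHermitian ev U s) (XM_isHermitian ev U (1-s))
    have H3 := hadamard_isHermitian (XM_isHermitian ev U (1/2)) (XM_isHermitian ev U (1/2))
    have Hsm : (r • ((XM ev U s).hadamard (XM ev U (1-s)) -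
        (XM ev U (1/2)).hadamard (XM ev U (1/2)))).IsHermitian := by
      show _ᴴ = _
      rw [conjTranspose_smul, star_trivial, (H2.sub H3)]
    exact H1.sub (H2.add Hsm)
  · intro v
    simp only [sub_mulVec, add_mulVec, smul_mulVec, dotProduct_sub, dotProduct_add,
      dotProduct_smul, quad_form, Complex.real_smul]
    norm_cast
    refine real_combo ev hev s t r hrdef hst
      (fun i m => Complex.normSq (∑ a, (starRingEnd ℂ) (v a) * (U i a * U m a))) ?_ ?_
    · intro i m
      exact congrArg Complex.normSq (Finset.sum_congr rfl fun a _ => by ring)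
    · intro i m
      exact Complex.normSq_nonneg _

end MatrixPart

section Glue

lemma mpow_apply {d : ℕ} {A : Matrix (Fin d) (Fin d) ℂ} (hA : A.IsHermitian) (α : ℝ)
    (a b : Fin d) :
    mpow A α a b = ∑ p, (((hA.eigenvalues p : ℝ) ^ α : ℝ) : ℂ) *
      ((hA.eigenvectorUnitary : Matrix (Fin d) (Fin d) ℂ) a p *
        (starRingEnd ℂ) ((hA.eigenvectorUnitary : Matrix (Fin d) (Fin d) ℂ) b p)) := by
  rw [mpow, hA.cfc_eq, Matrix.IsHermitian.cfc]
  simp [Matrix.mul_apply, Matrix.mul_diagonal, Matrix.conjTranspose_apply,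
    Matrix.diagonal_apply, ite_mul, zero_mul, Finset.sum_ite_eq, Finset.sum_ite_eq']
  exact Finset.sum_congr rfl fun x _ => by ring

lemma sum_mpow_eq {d n : ℕ} (A : Fin n → Matrix (Fin d) (Fin d) ℂ)
    (hA : ∀ j, (A j).PosDef) (α : ℝ) :
    (∑ j, mpow (A j) α) =
      XM (fun i : Fin n × Fin d => (hA i.1).1.eigenvalues i.2)
        (fun i a => ((hA i.1).1.eigenvectorUnitary : Matrix (Fin d) (Fin d) ℂ) a i.2) α := by
  ext a b
  rw [Matrix.sum_apply, XM, Matrix.of_apply, Fintype.sum_prod_type]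
  exact Finset.sum_congr rfl fun j _ => mpow_apply (hA j).1 α a b

end Glue

set_option maxHeartbeats 1000000 in
/-- Refinement of the Callebaut inequality for Hadamard products of sums of powers:
if `1 ≥ t ≥ s > 1/2` or `0 ≤ t ≤ s < 1/2`, then
`(Σ A_j^s) ∘ (Σ A_j^{1−s}) + ((t−s)/(s−1/2))((Σ A_j^s) ∘ (Σ A_j^{1−s}) − (Σ A_j^{1/2}) ∘ (Σ A_j^{1/2}))
  ≤ (Σ A_j^t) ∘ (Σ A_j^{1−t})` in the Loewner order. -/
theorem callebaut_hadamard_powers_refinement {d n : ℕ}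
    (A : Fin n → Matrix (Fin d) (Fin d) ℂ)
    (hA : ∀ j, (A j).PosDef)
    (s t : ℝ)
    (hst : (1 ≥ t ∧ t ≥ s ∧ s > 1/2) ∨ (0 ≤ t ∧ t ≤ s ∧ s < 1/2)) :
    ((∑ j, mpow (A j) t).hadamard (∑ j, mpow (A j) (1 - t)) -
      ((∑ j, mpow (A j) s).hadamard (∑ j, mpow (A j) (1 - s)) +
        ((t - s) / (s - 1/2)) •
          ((∑ j, mpow (A j) s).hadamard (∑ j, mpow (A j) (1 - s)) -
            (∑ j, mpow (A j) (1/2)).hadamard (∑ j, mpow (A j) (1/2))))).PosSemidef := by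
  rw [sum_mpow_eq A hA t, sum_mpow_eq A hA (1-t), sum_mpow_eq A hA s, sum_mpow_eq A hA (1-s),
    sum_mpow_eq A hA (1/2)]
  exact XM_combo_posSemidef (fun i : Fin n × Fin d => (hA i.1).1.eigenvalues i.2)
    (fun i => (hA i.1).eigenvalues_pos i.2)
    (fun i a => ((hA i.1).1.eigenvectorUnitary : Matrix (Fin d) (Fin d) ℂ) a i.2) s t hst
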